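/- Let H be a finite simple hypergraph with e-index k, and let ℓ⁺ and ℓ⁻ denote the numbers of positive and negative eigenvalues of U(H) (with multiplicity). Then the independence number α(H) satisfies α(H) ≤ min(k − ℓ⁺, k − ℓ⁻). -/

import Mathlib

variable {V : Type} [Fintype V] [DecidableEq V]

/-- A finite hypergraph: a finite vertex set and a multiset of nonempty edges. -/
structure MultisetHypergraph (V : Type) [Fintype V] [DecidableEq V] where
  verts : Finset V
  edges : Multiset (Finset V)
  edges_sub : ∀ e ∈ edges, e ⊆ verts
  edges_nonempty : ∀ e ∈ edges, e.Nonempty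

open Classical in
/-- `IH H` is `I(H)`: all parts of 2-partitions of edges plus all singletons of `V(H)`. -/
noncomputable def IH (H : MultisetHypergraph V) : Finset (Finset V) :=
  Finset.univ.filter fun S =>
    (S.Nonempty ∧ ∃ e ∈ H.edges, S ⊂ e) ∨ ∃ v ∈ H.verts, S = {v}

/-- The unified matrix of a hypergraph, indexed by `I(H)`. -/
noncomputable def U (H : MultisetHypergraph V) : Matrix ↥(IH H) ↥(IH H) ℝ := fun S T =>
  if (S : Finset V) = (T : Finset V) then
    (if (S : Finset V).card = 1 then (H.edges.count (S : Finset V) : ℝ) else 0)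
  else if Disjoint (S : Finset V) (T : Finset V) then
    (H.edges.count ((S : Finset V) ∪ (T : Finset V)) : ℝ)
  else 0

/-- Degree of a vertex: number of edges (with multiplicity) containing it. -/
def deg (H : MultisetHypergraph V) (v : V) : ℕ := (H.edges.filter (fun e => v ∈ e)).card

/-- Unified degree of a set `S`: number of edges (with multiplicity) containing `S`. -/
def udeg (H : MultisetHypergraph V) (S : Finset V) : ℕ := (H.edges.filter (fun e => S ⊆ e)).card

/-- `incl H` = ∂(H): number of edges of cardinality ≥ 2 properly contained in another edge. -/
noncomputable def incl (H : MultisetHypergraph V) : ℕ :=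
  Multiset.card (H.edges.filter (fun e => 2 ≤ e.card ∧ ∃ e' ∈ H.edges, e ⊂ e'))

/-- A hypergraph is simple if it has no multiple edges and no loops. -/
def Simple (H : MultisetHypergraph V) : Prop :=
  H.edges.Nodup ∧ ∀ e ∈ H.edges, 2 ≤ e.card

/-- `tau S` = τ(S): the set of unordered 2-partitions of `S`. -/
def tau (S : Finset V) : Finset (Finset (Finset V)) :=
  (S.powerset.filter fun A => A.Nonempty ∧ A ⊂ S).image fun A => {A, S \ A}



open Finset RealInnerProductSpace in
lemma key_aux {ι : Type} [Fintype ι] [DecidableEq ι] (M : Matrix ι ι ℝ)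
    (hM : M.IsHermitian) (T : Finset ι)
    (hT : ∀ i ∈ T, ∀ j ∈ T, M i j = 0)
    (J : Finset ι)
    (hJ : (∀ j ∈ J, 0 < hM.eigenvalues j) ∨ (∀ j ∈ J, hM.eigenvalues j < 0)) :
    J.card + T.card ≤ Fintype.card ι := by
  classical
  set E := EuclideanSpace ℝ ι
  set b : OrthonormalBasis ι ℝ E := hM.eigenvectorBasis with hb
  set e : OrthonormalBasis ι ℝ E := EuclideanSpace.basisFun ι ℝ with he
  set f : E →ₗ[ℝ] E := Matrix.toEuclideanLin M with hf
  have hfb : ∀ j, f (b j) = hM.eigenvalues j • b j := by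
    intro j
    have := hM.mulVec_eigenvectorBasis j
    apply (WithLp.equiv 2 (ι → ℝ)).injective
    exact this
  set P : Submodule ℝ E := Submodule.span ℝ (⇑b '' (J : Set ι)) with hP
  set W : Submodule ℝ E := Submodule.span ℝ (⇑e '' (T : Set ι)) with hW
  -- dimensions
  have hPdim : Module.finrank ℝ P = J.card := by
    have hli : LinearIndependent ℝ (⇑b ∘ (Subtype.val : ↥J → ι)) :=
      (b.orthonormal.linearIndependent).comp _ Subtype.val_injective
    have hrange : Set.range (⇑b ∘ (Subtype.val : ↥J → ι)) = ⇑b '' (J : Set ι) := by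
      rw [Set.range_comp, Subtype.range_coe]
    rw [hP, ← hrange, finrank_span_eq_card hli, Fintype.card_coe]
  have hWdim : Module.finrank ℝ W = T.card := by
    have hli : LinearIndependent ℝ (⇑e ∘ (Subtype.val : ↥T → ι)) :=
      (e.orthonormal.linearIndependent).comp _ Subtype.val_injective
    have hrange : Set.range (⇑e ∘ (Subtype.val : ↥T → ι)) = ⇑e '' (T : Set ι) := by
      rw [Set.range_comp, Subtype.range_coe]
    rw [hW, ← hrange, finrank_span_eq_card hli, Fintype.card_coe]
  -- membership props
  have hWmem : ∀ x ∈ W, ∀ i ∉ T, x i = 0 := by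
    intro x hx i hi
    have hker : W ≤ LinearMap.ker ((innerSL ℝ (e i)) : E →L[ℝ] ℝ).toLinearMap := by
      rw [hW]
      apply Submodule.span_le.2
      rintro y ⟨j, hj, rfl⟩
      have : i ≠ j := fun h => hi (h ▸ hj)
      simp only [SetLike.mem_coe, LinearMap.mem_ker, ContinuousLinearMap.coe_coe, innerSL_apply_apply]
      exact e.orthonormal.2 this
    have := hker hx
    simp only [LinearMap.mem_ker, ContinuousLinearMap.coe_coe, innerSL_apply_apply] at this
    rw [he, EuclideanSpace.basisFun_apply, EuclideanSpace.inner_single_left] at this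
    simpa using this
  have hPmem : ∀ x ∈ P, ∀ j ∉ J, ⟪b j, x⟫ = 0 := by
    intro x hx j hj
    have hker : P ≤ LinearMap.ker ((innerSL ℝ (b j)) : E →L[ℝ] ℝ).toLinearMap := by
      rw [hP]
      apply Submodule.span_le.2
      rintro y ⟨i, hi, rfl⟩
      have : j ≠ i := fun h => hj (h ▸ hi)
      simp only [SetLike.mem_coe, LinearMap.mem_ker, ContinuousLinearMap.coe_coe, innerSL_apply_apply]
      exact b.orthonormal.2 this
    have := hker hx
    simpa using this
  -- quadratic form
  set Q : E → ℝ := fun x => ⟪x, f x⟫ with hQ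
  have hQW : ∀ x ∈ W, Q x = 0 := by
    intro x hx
    have hfx : ∀ i, f x i = ∑ j, M i j * x j := by
      intro i
      rw [hf, Matrix.toEuclideanLin_apply]
      rfl
    rw [hQ]
    simp only
    rw [PiLp.inner_apply]
    apply Finset.sum_eq_zero
    intro i _
    simp only [RCLike.inner_apply, starRingEnd_apply, star_trivial]
    by_cases hi : i ∈ T
    · rw [hfx i, Finset.sum_mul]
      refine Finset.sum_eq_zero fun j _ => ?_
      by_cases hj : j ∈ T
      · rw [hT i hi j hj]; ring
      · rw [hWmem x hx j hj]; ring
    · simp [hWmem x hx i hi]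
  have hQP : ∀ x ∈ P, x ≠ 0 → Q x ≠ 0 := by
    intro x hx hx0
    have hxrep : x = ∑ j, ⟪b j, x⟫ • b j := (b.sum_repr' x).symm
    have hfx : f x = ∑ j, (hM.eigenvalues j * ⟪b j, x⟫) • b j := by
      conv_lhs => rw [hxrep]
      rw [map_sum]
      refine Finset.sum_congr rfl fun j _ => ?_
      rw [map_smul, hfb, smul_smul, mul_comm]
    have hQx : Q x = ∑ j ∈ J, hM.eigenvalues j * ⟪b j, x⟫ ^ 2 := by
      rw [hQ]
      simp only
      rw [hfx, inner_sum]
      rw [← Finset.sum_subset (Finset.subset_univ J)]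
      · refine Finset.sum_congr rfl fun j _ => ?_
        rw [real_inner_smul_right, real_inner_comm]
        ring
      · intro j _ hj
        rw [real_inner_smul_right, hPmem x hx j hj]
        simp [real_inner_comm x (b j), hPmem x hx j hj]
    have hcj : ∃ j ∈ J, ⟪b j, x⟫ ≠ 0 := by
      by_contra hc
      push_neg at hc
      apply hx0
      rw [hxrep]
      apply Finset.sum_eq_zero
      intro j _
      by_cases hj : j ∈ J
      · rw [hc j hj, zero_smul]
      · rw [hPmem x hx j hj, zero_smul]
    obtain ⟨j0, hj0, hc0⟩ := hcj
    rw [hQx]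
    rcases hJ with hpos | hneg
    · have : 0 < ∑ j ∈ J, hM.eigenvalues j * ⟪b j, x⟫ ^ 2 := by
        apply Finset.sum_pos' (fun j hj => mul_nonneg (hpos j hj).le (sq_nonneg _))
        exact ⟨j0, hj0, mul_pos (hpos j0 hj0) (by positivity)⟩
      exact this.ne'
    · have key : 0 < ∑ j ∈ J, -(hM.eigenvalues j * ⟪b j, x⟫ ^ 2) := by
        apply Finset.sum_pos'
        · intro j hj
          have := hneg j hj
          nlinarith [sq_nonneg (⟪b j, x⟫ : ℝ)]
        · refine ⟨j0, hj0, ?_⟩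
          have h1 := hneg j0 hj0
          have h2 : (0:ℝ) < ⟪b j0, x⟫ ^ 2 := by positivity
          nlinarith
      rw [Finset.sum_neg_distrib] at key
      linarith
  -- intersection trivial
  have hinf : P ⊓ W = ⊥ := by
    rw [Submodule.eq_bot_iff]
    intro x ⟨hxP, hxW⟩
    by_contra hx0
    exact hQP x hxP hx0 (hQW x hxW)
  have := Submodule.finrank_sup_add_finrank_inf_eq P W
  rw [hinf, finrank_bot, add_zero] at this
  have hle : Module.finrank ℝ (P ⊔ W : Submodule ℝ E) ≤ Fintype.card ι := by
    have := Submodule.finrank_le (P ⊔ W)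
    rwa [finrank_euclideanSpace] at this
  omega


theorem independence_number_bound (H : MultisetHypergraph V) (hs : Simple H)
    (hU : (U H).IsHermitian) (A : Finset V) (hA : A ⊆ H.verts)
    (hind : ∀ e ∈ H.edges, ¬ e ⊆ A) :
    A.card ≤
      min (Fintype.card ↥(IH H) -
            (Finset.univ.filter (fun i : ↥(IH H) => 0 < hU.eigenvalues i)).card)
          (Fintype.card ↥(IH H) -
            (Finset.univ.filter (fun i : ↥(IH H) => hU.eigenvalues i < 0)).card) := by
  classical
  have hsing : ∀ v ∈ A, ({v} : Finset V) ∈ IH H := by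
    intro v hv
    simp only [IH, Finset.mem_filter, Finset.mem_univ, true_and]
    exact Or.inr ⟨v, hA hv, rfl⟩
  set T : Finset ↥(IH H) :=
    A.attach.image (fun x => (⟨{x.1}, hsing x.1 x.2⟩ : ↥(IH H))) with hTdef
  have hTcard : T.card = A.card := by
    rw [hTdef, Finset.card_image_of_injective _ ?_, Finset.card_attach]
    intro x y hxy
    have h1 : ({(x:V)} : Finset V) = {(y:V)} := congrArg Subtype.val hxy
    exact Subtype.ext (Finset.singleton_injective h1)
  have hT0 : ∀ i ∈ T, ∀ j ∈ T, U H i j = 0 := by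
    intro i hi j hj
    rw [hTdef, Finset.mem_image] at hi hj
    obtain ⟨u, -, rfl⟩ := hi
    obtain ⟨v, -, rfl⟩ := hj
    by_cases huv : (u : V) = (v : V)
    · simp only [U, huv, if_pos rfl, Finset.card_singleton, if_pos]
      norm_cast
      rw [Multiset.count_eq_zero]
      intro hmem
      have := hs.2 _ hmem
      simp at this
    · have hne : ({(u:V)} : Finset V) ≠ {(v:V)} := by
        simpa [Finset.singleton_inj] using huv
      have hdisj : Disjoint ({(u:V)} : Finset V) {(v:V)} := by
        simpa [Finset.disjoint_singleton] using huv
      simp only [U, if_neg hne, if_pos hdisj]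
      norm_cast
      rw [Multiset.count_eq_zero]
      intro hmem
      refine hind _ hmem ?_
      intro w hw
      rcases Finset.mem_union.1 hw with h | h <;>
        [exact (Finset.mem_singleton.1 h) ▸ u.2; exact (Finset.mem_singleton.1 h) ▸ v.2]
  have hpos := key_aux (U H) hU T hT0
    (Finset.univ.filter fun i => 0 < hU.eigenvalues i)
    (Or.inl (fun j hj => (Finset.mem_filter.1 hj).2))
  have hneg := key_aux (U H) hU T hT0
    (Finset.univ.filter fun i => hU.eigenvalues i < 0)
    (Or.inr (fun j hj => (Finset.mem_filter.1 hj).2))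
  rw [hTcard] at hpos hneg
  rw [le_min_iff]
  omega
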